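/- Let G be a graph with Δ(G) ≥ 4 and L a list assignment with |L(v)| ≥ Δ(G) + 3. Suppose u is a vertex of degree 3 all of whose three neighbors u₁, u₂, u₃ have degree 2 in G. If G − {u, u₁, u₂, u₃} admits a 2-distance L-coloring, then so does G. -/
import Mathlib


open SimpleGraph

/-- Maximum average degree: the supremum over all nonempty subgraphs `H` of `2|E(H)|/|V(H)|`. -/
noncomputable def mad {V : Type} [Fintype V] (G : SimpleGraph V) : ℝ :=
  sSup {x : ℝ | ∃ H : G.Subgraph, H.verts.Nonempty ∧
    x = 2 * H.edgeSet.ncard / H.verts.ncard}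

/-- Two distinct vertices are at distance at most 2. -/
def TwoDistAdj {V : Type} (G : SimpleGraph V) (u v : V) : Prop :=
  u ≠ v ∧ (G.Adj u v ∨ ∃ w, G.Adj u w ∧ G.Adj w v)

/-- `φ` is a 2-distance coloring of `G` from the lists `L`: each vertex gets a color from
its list and vertices at distance at most 2 get distinct colors. -/
def IsTwoDistListColoring {V : Type} (G : SimpleGraph V) (L : V → Finset ℕ) (φ : V → ℕ) :
    Prop :=
  (∀ v, φ v ∈ L v) ∧ ∀ u v, TwoDistAdj G u v → φ u ≠ φ v

/-- If `Δ(G) ≥ 4`, lists have size at least `Δ(G) + 3`, and `u` is a 3-vertex whose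
three neighbors `u₁, u₂, u₃` all have degree 2, then any 2-distance list coloring of
`G − {u, u₁, u₂, u₃}` extends to `G`. -/
theorem extend_coloring_111_vertex
    {V : Type} [Fintype V] [DecidableEq V] (G : SimpleGraph V) [DecidableRel G.Adj]
    (hΔ : 4 ≤ G.maxDegree)
    (L : V → Finset ℕ) (hL : ∀ y, G.maxDegree + 3 ≤ (L y).card)
    (u u₁ u₂ u₃ : V) (hdu : G.degree u = 3)
    (h1 : G.Adj u u₁) (h2 : G.Adj u u₂) (h3 : G.Adj u u₃)
    (h12 : u₁ ≠ u₂) (h13 : u₁ ≠ u₃) (h23 : u₂ ≠ u₃)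
    (hd1 : G.degree u₁ = 2) (hd2 : G.degree u₂ = 2) (hd3 : G.degree u₃ = 2)
    (hcol : ∃ φ, IsTwoDistListColoring
      (G.induce {y | y ≠ u ∧ y ≠ u₁ ∧ y ≠ u₂ ∧ y ≠ u₃}) (fun y => L y.1) φ) :
    ∃ φ : V → ℕ, IsTwoDistListColoring G L φ := by
  classical
  set P : V → Prop := fun y => y ≠ u ∧ y ≠ u₁ ∧ y ≠ u₂ ∧ y ≠ u₃ with hP
  obtain ⟨φ₀, hφ₀L, hφ₀ne⟩ := hcol
  have hu1 : u₁ ≠ u := (G.ne_of_adj h1).symm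
  have hu2 : u₂ ≠ u := (G.ne_of_adj h2).symm
  have hu3 : u₃ ≠ u := (G.ne_of_adj h3).symm
  -- the other neighbor of a degree-2 neighbor of `u`
  have getw : ∀ x, G.Adj u x → G.degree x = 2 →
      ∃ w, w ≠ u ∧ G.neighborFinset x = {u, w} := by
    intro x hux hdx
    have huN : u ∈ G.neighborFinset x := (G.mem_neighborFinset x u).2 hux.symm
    have hcard : (G.neighborFinset x).card = 2 := hdx
    have hex : ∃ w ∈ G.neighborFinset x, w ≠ u := by
      by_contra hcon
      push_neg at hcon
      have hsub : G.neighborFinset x ⊆ {u} := fun z hz => Finset.mem_singleton.2 (hcon z hz)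
      have := Finset.card_le_card hsub
      simp [hcard] at this
    obtain ⟨w, hwN, hwu⟩ := hex
    refine ⟨w, hwu, ?_⟩
    refine (Finset.eq_of_subset_of_card_le ?_ ?_).symm
    · intro z hz
      rcases Finset.mem_insert.1 hz with h | h
      · exact h ▸ huN
      · exact (Finset.mem_singleton.1 h) ▸ hwN
    · rw [hcard, Finset.card_insert_of_notMem (by simpa using hwu.symm), Finset.card_singleton]
  obtain ⟨w₁, hw₁u, hN1⟩ := getw u₁ h1 hd1
  obtain ⟨w₂, hw₂u, hN2⟩ := getw u₂ h2 hd2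
  obtain ⟨w₃, hw₃u, hN3⟩ := getw u₃ h3 hd3
  -- neighborhood of u
  have hNu : G.neighborFinset u = {u₁, u₂, u₃} := by
    refine (Finset.eq_of_subset_of_card_le ?_ ?_).symm
    · intro z hz
      simp only [Finset.mem_insert, Finset.mem_singleton] at hz
      rcases hz with h | h | h <;>
        · subst h; rw [SimpleGraph.mem_neighborFinset]; assumption
    · have : ({u₁, u₂, u₃} : Finset V).card = 3 := by
        rw [Finset.card_insert_of_notMem (by simp [h12, h13]),
          Finset.card_insert_of_notMem (by simpa using h23), Finset.card_singleton]
      rw [this]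
      exact le_of_eq hdu
  have hadjU : ∀ z, G.Adj u z → z = u₁ ∨ z = u₂ ∨ z = u₃ := by
    intro z hz
    have : z ∈ G.neighborFinset u := (G.mem_neighborFinset u z).2 hz
    rw [hNu] at this; simpa using this
  have hadj1 : ∀ z, G.Adj u₁ z → z = u ∨ z = w₁ := by
    intro z hz
    have : z ∈ G.neighborFinset u₁ := (G.mem_neighborFinset u₁ z).2 hz
    rw [hN1] at this; simpa using this
  have hadj2 : ∀ z, G.Adj u₂ z → z = u ∨ z = w₂ := by
    intro z hz
    have : z ∈ G.neighborFinset u₂ := (G.mem_neighborFinset u₂ z).2 hz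
    rw [hN2] at this; simpa using this
  have hadj3 : ∀ z, G.Adj u₃ z → z = u ∨ z = w₃ := by
    intro z hz
    have : z ∈ G.neighborFinset u₃ := (G.mem_neighborFinset u₃ z).2 hz
    rw [hN3] at this; simpa using this
  have hw1adj : G.Adj u₁ w₁ := by
    rw [← SimpleGraph.mem_neighborFinset, hN1]; simp
  have hw2adj : G.Adj u₂ w₂ := by
    rw [← SimpleGraph.mem_neighborFinset, hN2]; simp
  have hw3adj : G.Adj u₃ w₃ := by
    rw [← SimpleGraph.mem_neighborFinset, hN3]; simp
  -- coloring of the outside, as a total function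
  set ψ₀ : V → ℕ := fun y => if h : P y then φ₀ ⟨y, h⟩ else 0 with hψ₀def
  have hψ₀P : ∀ (y : V) (h : P y), ψ₀ y = φ₀ ⟨y, h⟩ := by
    intro y h
    show (if h : P y then φ₀ ⟨y, h⟩ else 0) = φ₀ ⟨y, h⟩
    rw [dif_pos h]
  -- picking a fresh color
  have pick : ∀ (x : V) (F : Finset ℕ), F.card < (L x).card → ∃ c ∈ L x, c ∉ F := by
    intro x F hF
    by_contra hcon
    push_neg at hcon
    exact absurd (Finset.card_le_card hcon) (not_le.2 hF)
  have hdegle : ∀ w : V, (G.neighborFinset w).card ≤ G.maxDegree := fun w =>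
    G.degree_le_maxDegree w
  -- choose c1
  obtain ⟨c1, hc1L, hc1F⟩ := pick u₁ ((insert w₁ (G.neighborFinset w₁)).image ψ₀) (by
    calc ((insert w₁ (G.neighborFinset w₁)).image ψ₀).card
        ≤ (insert w₁ (G.neighborFinset w₁)).card := Finset.card_image_le
      _ ≤ (G.neighborFinset w₁).card + 1 := Finset.card_insert_le _ _
      _ ≤ G.maxDegree + 1 := by have := hdegle w₁; omega
      _ < (L u₁).card := by have := hL u₁; omega)
  -- choose c2
  obtain ⟨c2, hc2L, hc2F⟩ := pick u₂
      (insert c1 ((insert w₂ (G.neighborFinset w₂)).image ψ₀)) (by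
    calc (insert c1 ((insert w₂ (G.neighborFinset w₂)).image ψ₀)).card
        ≤ ((insert w₂ (G.neighborFinset w₂)).image ψ₀).card + 1 := Finset.card_insert_le _ _
      _ ≤ (insert w₂ (G.neighborFinset w₂)).card + 1 :=
          Nat.add_le_add_right Finset.card_image_le 1
      _ ≤ (G.neighborFinset w₂).card + 2 := by have := Finset.card_insert_le w₂ (G.neighborFinset w₂); omega
      _ ≤ G.maxDegree + 2 := by have := hdegle w₂; omega
      _ < (L u₂).card := by have := hL u₂; omega)
  -- choose c3
  have hu₃w₃ : u₃ ∈ G.neighborFinset w₃ := (G.mem_neighborFinset w₃ u₃).2 hw3adj.symm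
  obtain ⟨c3, hc3L, hc3F⟩ := pick u₃
      (insert c1 (insert c2 ((insert w₃ ((G.neighborFinset w₃).erase u₃)).image ψ₀))) (by
    have he : ((G.neighborFinset w₃).erase u₃).card = (G.neighborFinset w₃).card - 1 :=
      Finset.card_erase_of_mem hu₃w₃
    have hpos : 1 ≤ (G.neighborFinset w₃).card := Finset.card_pos.2 ⟨u₃, hu₃w₃⟩
    have hb := hdegle w₃
    have h1' : ((insert w₃ ((G.neighborFinset w₃).erase u₃)).image ψ₀).card
        ≤ ((G.neighborFinset w₃).erase u₃).card + 1 :=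
      le_trans Finset.card_image_le (Finset.card_insert_le _ _)
    have h2' := Finset.card_insert_le c2 ((insert w₃ ((G.neighborFinset w₃).erase u₃)).image ψ₀)
    have h3' := Finset.card_insert_le c1 (insert c2 ((insert w₃ ((G.neighborFinset w₃).erase u₃)).image ψ₀))
    have := hL u₃
    omega)
  -- choose cu
  obtain ⟨cu, hcuL, hcuF⟩ := pick u
      (insert c1 (insert c2 (insert c3 (({w₁, w₂, w₃} : Finset V).image ψ₀)))) (by
    have h1' : (({w₁, w₂, w₃} : Finset V).image ψ₀).card ≤ 3 :=
      le_trans Finset.card_image_le (by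
        have := Finset.card_insert_le w₁ ({w₂, w₃} : Finset V)
        have := Finset.card_insert_le w₂ ({w₃} : Finset V)
        simp only [Finset.card_singleton] at *
        omega)
    have h2' := Finset.card_insert_le c3 (({w₁, w₂, w₃} : Finset V).image ψ₀)
    have h3' := Finset.card_insert_le c2 (insert c3 (({w₁, w₂, w₃} : Finset V).image ψ₀))
    have h4' := Finset.card_insert_le c1 (insert c2 (insert c3 (({w₁, w₂, w₃} : Finset V).image ψ₀)))
    have := hL u
    omega)
  -- basic distinctness of the new colors
  have hcuc1 : cu ≠ c1 := fun h => hcuF (by simp [h])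
  have hcuc2 : cu ≠ c2 := fun h => hcuF (by simp [h])
  have hcuc3 : cu ≠ c3 := fun h => hcuF (by simp [h])
  have hc2c1 : c2 ≠ c1 := fun h => hc2F (by simp [h])
  have hc3c1 : c3 ≠ c1 := fun h => hc3F (by simp [h])
  have hc3c2 : c3 ≠ c2 := fun h => hc3F (by simp [h])
  have hc1w : ∀ y, y ∈ insert w₁ (G.neighborFinset w₁) → c1 ≠ ψ₀ y := by
    intro y hy h
    exact hc1F (Finset.mem_image.2 ⟨y, hy, h.symm⟩)
  have hc2w : ∀ y, y ∈ insert w₂ (G.neighborFinset w₂) → c2 ≠ ψ₀ y := by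
    intro y hy h
    exact hc2F (Finset.mem_insert_of_mem (Finset.mem_image.2 ⟨y, hy, h.symm⟩))
  have hc3w : ∀ y, y ∈ insert w₃ ((G.neighborFinset w₃).erase u₃) → c3 ≠ ψ₀ y := by
    intro y hy h
    exact hc3F (Finset.mem_insert_of_mem (Finset.mem_insert_of_mem
      (Finset.mem_image.2 ⟨y, hy, h.symm⟩)))
  have hcuw : ∀ y, y ∈ ({w₁, w₂, w₃} : Finset V) → cu ≠ ψ₀ y := by
    intro y hy h
    exact hcuF (Finset.mem_insert_of_mem (Finset.mem_insert_of_mem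
      (Finset.mem_insert_of_mem (Finset.mem_image.2 ⟨y, hy, h.symm⟩))))
  -- the extended coloring
  set ψ : V → ℕ := fun y =>
    if y = u then cu else if y = u₁ then c1 else if y = u₂ then c2 else
      if y = u₃ then c3 else ψ₀ y with hψdef
  have hψu : ψ u = cu := by simp [hψdef]
  have hψ1 : ψ u₁ = c1 := by simp [hψdef, hu1]
  have hψ2 : ψ u₂ = c2 := by simp [hψdef, hu2, h12.symm]
  have hψ3 : ψ u₃ = c3 := by simp [hψdef, hu3, h13.symm, h23.symm]
  have hψP : ∀ y, P y → ψ y = ψ₀ y := by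
    intro y hy
    simp [hψdef, hy.1, hy.2.1, hy.2.2.1, hy.2.2.2]
  -- key 2-distance localization lemmas
  have key0 : ∀ y, P y → TwoDistAdj G u y → y ∈ ({w₁, w₂, w₃} : Finset V) := by
    intro y hy ⟨hne, hpath⟩
    rcases hpath with h | ⟨w, hw, hwy⟩
    · rcases hadjU y h with h | h | h
      · exact absurd h hy.2.1
      · exact absurd h hy.2.2.1
      · exact absurd h hy.2.2.2
    · rcases hadjU w hw with h | h | h
      · subst h
        rcases hadj1 y hwy with h | h
        · exact absurd h hy.1
        · simp [h]
      · subst h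
        rcases hadj2 y hwy with h | h
        · exact absurd h hy.1
        · simp [h]
      · subst h
        rcases hadj3 y hwy with h | h
        · exact absurd h hy.1
        · simp [h]
  have key1 : ∀ y, P y → TwoDistAdj G u₁ y → y ∈ insert w₁ (G.neighborFinset w₁) := by
    intro y hy ⟨hne, hpath⟩
    rcases hpath with h | ⟨w, hw, hwy⟩
    · rcases hadj1 y h with h | h
      · exact absurd h hy.1
      · simp [h]
    · rcases hadj1 w hw with h | h
      · subst h
        rcases hadjU y hwy with h | h | h
        · exact absurd h hy.2.1
        · exact absurd h hy.2.2.1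
        · exact absurd h hy.2.2.2
      · subst h
        exact Finset.mem_insert_of_mem ((G.mem_neighborFinset _ _).2 hwy)
  have key2 : ∀ y, P y → TwoDistAdj G u₂ y → y ∈ insert w₂ (G.neighborFinset w₂) := by
    intro y hy ⟨hne, hpath⟩
    rcases hpath with h | ⟨w, hw, hwy⟩
    · rcases hadj2 y h with h | h
      · exact absurd h hy.1
      · simp [h]
    · rcases hadj2 w hw with h | h
      · subst h
        rcases hadjU y hwy with h | h | h
        · exact absurd h hy.2.1
        · exact absurd h hy.2.2.1
        · exact absurd h hy.2.2.2
      · subst h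
        exact Finset.mem_insert_of_mem ((G.mem_neighborFinset _ _).2 hwy)
  have key3 : ∀ y, P y → TwoDistAdj G u₃ y →
      y ∈ insert w₃ ((G.neighborFinset w₃).erase u₃) := by
    intro y hy ⟨hne, hpath⟩
    rcases hpath with h | ⟨w, hw, hwy⟩
    · rcases hadj3 y h with h | h
      · exact absurd h hy.1
      · simp [h]
    · rcases hadj3 w hw with h | h
      · subst h
        rcases hadjU y hwy with h | h | h
        · exact absurd h hy.2.1
        · exact absurd h hy.2.2.1
        · exact absurd h hy.2.2.2
      · subst h
        exact Finset.mem_insert_of_mem (Finset.mem_erase.2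
          ⟨hy.2.2.2, (G.mem_neighborFinset _ _).2 hwy⟩)
  -- distinctness over pairs where exactly the first is removed
  have hone : ∀ x y, ¬ P x → P y → TwoDistAdj G x y → ψ x ≠ ψ y := by
    intro x y hx hy hxy
    have hxS : x = u ∨ x = u₁ ∨ x = u₂ ∨ x = u₃ := by
      by_contra hcon
      push_neg at hcon
      exact hx ⟨hcon.1, hcon.2.1, hcon.2.2.1, hcon.2.2.2⟩
    rw [hψP y hy]
    rcases hxS with h | h | h | h
    · subst h; rw [hψu]; exact hcuw y (key0 y hy hxy)
    · subst h; rw [hψ1]; exact hc1w y (key1 y hy hxy)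
    · subst h; rw [hψ2]; exact hc2w y (key2 y hy hxy)
    · subst h; rw [hψ3]; exact hc3w y (key3 y hy hxy)
  -- distinctness among removed vertices
  have hboth : ∀ x y, ¬ P x → ¬ P y → x ≠ y → ψ x ≠ ψ y := by
    intro x y hx hy hne
    have hxS : x = u ∨ x = u₁ ∨ x = u₂ ∨ x = u₃ := by
      by_contra hcon; push_neg at hcon
      exact hx ⟨hcon.1, hcon.2.1, hcon.2.2.1, hcon.2.2.2⟩
    have hyS : y = u ∨ y = u₁ ∨ y = u₂ ∨ y = u₃ := by
      by_contra hcon; push_neg at hcon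
      exact hy ⟨hcon.1, hcon.2.1, hcon.2.2.1, hcon.2.2.2⟩
    rcases hxS with h | h | h | h <;> rcases hyS with h' | h' | h' | h' <;>
      subst h <;> subst h' <;>
      first
      | exact absurd rfl hne
      | (rw [hψu, hψ1]; exact hcuc1)
      | (rw [hψu, hψ2]; exact hcuc2)
      | (rw [hψu, hψ3]; exact hcuc3)
      | (rw [hψ1, hψu]; exact hcuc1.symm)
      | (rw [hψ1, hψ2]; exact hc2c1.symm)
      | (rw [hψ1, hψ3]; exact hc3c1.symm)
      | (rw [hψ2, hψu]; exact hcuc2.symm)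
      | (rw [hψ2, hψ1]; exact hc2c1)
      | (rw [hψ2, hψ3]; exact hc3c2.symm)
      | (rw [hψ3, hψu]; exact hcuc3.symm)
      | (rw [hψ3, hψ1]; exact hc3c1)
      | (rw [hψ3, hψ2]; exact hc3c2)
  -- symmetry of TwoDistAdj
  have hsym : ∀ x y, TwoDistAdj G x y → TwoDistAdj G y x := by
    rintro x y ⟨hne, h | ⟨w, hw, hwy⟩⟩
    · exact ⟨hne.symm, Or.inl h.symm⟩
    · exact ⟨hne.symm, Or.inr ⟨w, hwy.symm, hw.symm⟩⟩
  refine ⟨ψ, ?_, ?_⟩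
  · -- membership in lists
    intro v
    by_cases hv : P v
    · rw [hψP v hv, hψ₀P v hv]
      exact hφ₀L ⟨v, hv⟩
    · have hvS : v = u ∨ v = u₁ ∨ v = u₂ ∨ v = u₃ := by
        by_contra hcon; push_neg at hcon
        exact hv ⟨hcon.1, hcon.2.1, hcon.2.2.1, hcon.2.2.2⟩
      rcases hvS with h | h | h | h <;> subst h
      · rw [hψu]; exact hcuL
      · rw [hψ1]; exact hc1L
      · rw [hψ2]; exact hc2L
      · rw [hψ3]; exact hc3L
  · -- properness
    intro x y hxy
    by_cases hx : P x <;> by_cases hy : P y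
    · -- both outside: use the given coloring
      rw [hψP x hx, hψP y hy, hψ₀P x hx, hψ₀P y hy]
      refine hφ₀ne ⟨x, hx⟩ ⟨y, hy⟩ ?_
      obtain ⟨hne, hpath⟩ := hxy
      refine ⟨fun h => hne (congrArg Subtype.val h), ?_⟩
      rcases hpath with h | ⟨w, hw, hwy⟩
      · exact Or.inl h
      · by_cases hwP : P w
        · exact Or.inr ⟨⟨w, hwP⟩, hw, hwy⟩
        · exfalso
          have hwS : w = u ∨ w = u₁ ∨ w = u₂ ∨ w = u₃ := by
            by_contra hcon; push_neg at hcon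
            exact hwP ⟨hcon.1, hcon.2.1, hcon.2.2.1, hcon.2.2.2⟩
          rcases hwS with h | h | h | h
          · subst h
            rcases hadjU x hw.symm with h | h | h
            · exact hx.2.1 h
            · exact hx.2.2.1 h
            · exact hx.2.2.2 h
          · subst h
            have hxw : x = w₁ := by
              rcases hadj1 x hw.symm with h | h
              · exact absurd h hx.1
              · exact h
            have hyw : y = w₁ := by
              rcases hadj1 y hwy with h | h
              · exact absurd h hy.1
              · exact h
            exact hne (hxw.trans hyw.symm)
          · subst h
            have hxw : x = w₂ := by
              rcases hadj2 x hw.symm with h | h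
              · exact absurd h hx.1
              · exact h
            have hyw : y = w₂ := by
              rcases hadj2 y hwy with h | h
              · exact absurd h hy.1
              · exact h
            exact hne (hxw.trans hyw.symm)
          · subst h
            have hxw : x = w₃ := by
              rcases hadj3 x hw.symm with h | h
              · exact absurd h hx.1
              · exact h
            have hyw : y = w₃ := by
              rcases hadj3 y hwy with h | h
              · exact absurd h hy.1
              · exact h
            exact hne (hxw.trans hyw.symm)
    · exact (hone y x hy hx (hsym x y hxy)).symm
    · exact hone x y hx hy hxy
    · exact hboth x y hx hy hxy.1
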